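/- arXiv:2509.05507 — 2 statements merged into one kernel-verified Lean document; each statement's English description precedes it below -/
import Mathlib

section
/- For all real a > 0 and all natural numbers m, n ≥ 1, the integral over ℝ of 1/((a + i y)^m (a - i y)^n) dy equals π · binom(m + n - 2, m - 1) / (2^{m+n-2} · a^{m+n-1}). -/
open Complex MeasureTheory Filter Real

namespace FreqLoopAux

variable {a : ℝ}

lemma ne_u (ha : 0 < a) (y : ℝ) : (a : ℂ) + Complex.I * y ≠ 0 := by
  intro h
  have h2 := congrArg Complex.re h
  simp at h2
  exact ha.ne' h2

lemma ne_v (ha : 0 < a) (y : ℝ) : (a : ℂ) - Complex.I * y ≠ 0 := by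
  intro h
  have h2 := congrArg Complex.re h
  simp at h2
  exact ha.ne' h2

lemma norm_u (y : ℝ) : ‖(a : ℂ) + Complex.I * y‖ = Real.sqrt (a ^ 2 + y ^ 2) := by
  rw [Complex.norm_def]
  congr 1
  simp [Complex.normSq_apply]
  ring

lemma norm_v (y : ℝ) : ‖(a : ℂ) - Complex.I * y‖ = Real.sqrt (a ^ 2 + y ^ 2) := by
  rw [Complex.norm_def]
  congr 1
  simp [Complex.normSq_apply]
  ring

lemma le_sqrt' (ha : 0 < a) (y : ℝ) : a ≤ Real.sqrt (a ^ 2 + y ^ 2) := by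
  nth_rewrite 1 [← Real.sqrt_sq ha.le]
  exact Real.sqrt_le_sqrt (by nlinarith)

lemma abs_le_sqrt (y : ℝ) : |y| ≤ Real.sqrt (a ^ 2 + y ^ 2) := by
  rw [← Real.sqrt_sq_eq_abs]
  exact Real.sqrt_le_sqrt (by nlinarith)

lemma integrable_real (ha : 0 < a) : Integrable fun y : ℝ => (a ^ 2 + y ^ 2)⁻¹ := by
  have h : (fun y : ℝ => (a ^ 2 + y ^ 2)⁻¹)
      = fun y : ℝ => (a ^ 2)⁻¹ * (1 + (y / a) ^ 2)⁻¹ := by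
    funext y
    rw [← mul_inv]
    congr 1
    field_simp
  rw [h]
  exact (integrable_inv_one_add_sq.comp_div ha.ne').const_mul _

lemma integral_real (ha : 0 < a) : ∫ y : ℝ, (a ^ 2 + y ^ 2)⁻¹ = Real.pi / a := by
  have h := MeasureTheory.Measure.integral_comp_mul_left
    (fun y : ℝ => (a ^ 2 + y ^ 2)⁻¹) a
  have h2 : (fun x : ℝ => (a ^ 2 + (a * x) ^ 2)⁻¹)
      = fun x : ℝ => (a ^ 2)⁻¹ * (1 + x ^ 2)⁻¹ := by
    funext x
    rw [← mul_inv]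
    congr 1
    ring
  rw [h2] at h
  rw [MeasureTheory.integral_const_mul, integral_univ_inv_one_add_sq] at h
  have ha' : |a⁻¹| = a⁻¹ := abs_of_pos (by positivity)
  rw [ha', smul_eq_mul] at h
  have := h.symm
  field_simp at this ⊢
  nlinarith [Real.pi_pos, this]

/-- The general integrand. -/
noncomputable def J (a : ℝ) (m n : ℕ) : ℂ :=
  ∫ y : ℝ, (((a : ℂ) + Complex.I * y) ^ m * ((a : ℂ) - Complex.I * y) ^ n)⁻¹

lemma integrable_aux (ha : 0 < a) (m n : ℕ) (h2 : 2 ≤ m + n) :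
    Integrable fun y : ℝ =>
      (((a : ℂ) + Complex.I * y) ^ m * ((a : ℂ) - Complex.I * y) ^ n)⁻¹ := by
  have hcont : Continuous fun y : ℝ =>
      (((a : ℂ) + Complex.I * y) ^ m * ((a : ℂ) - Complex.I * y) ^ n)⁻¹ := by
    apply Continuous.inv₀
    · fun_prop
    · intro y
      exact mul_ne_zero (pow_ne_zero _ (ne_u ha y)) (pow_ne_zero _ (ne_v ha y))
  refine (Integrable.const_mul (integrable_real ha) ((a ^ (m + n - 2))⁻¹)).mono
    hcont.aestronglyMeasurable (Filter.Eventually.of_forall fun y => ?_)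
  have hr0 : (0:ℝ) < Real.sqrt (a ^ 2 + y ^ 2) := lt_of_lt_of_le ha (le_sqrt' ha y)
  have hsq : Real.sqrt (a ^ 2 + y ^ 2) ^ 2 = a ^ 2 + y ^ 2 :=
    Real.sq_sqrt (by positivity)
  have hnorm : ‖(((a : ℂ) + Complex.I * y) ^ m * ((a : ℂ) - Complex.I * y) ^ n)⁻¹‖
      = (Real.sqrt (a ^ 2 + y ^ 2) ^ (m + n))⁻¹ := by
    rw [norm_inv, norm_mul, norm_pow, norm_pow, norm_u, norm_v, ← pow_add]
  rw [hnorm]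
  have hb : a ^ (m + n - 2) * (a ^ 2 + y ^ 2) ≤ Real.sqrt (a ^ 2 + y ^ 2) ^ (m + n) := by
    have hmn : Real.sqrt (a ^ 2 + y ^ 2) ^ (m + n)
        = Real.sqrt (a ^ 2 + y ^ 2) ^ (m + n - 2) * (a ^ 2 + y ^ 2) := by
      conv_lhs => rw [show m + n = (m + n - 2) + 2 from by omega]
      rw [pow_add, hsq]
    rw [hmn]
    have h1 : a ^ (m + n - 2) ≤ Real.sqrt (a ^ 2 + y ^ 2) ^ (m + n - 2) :=
      pow_le_pow_left₀ ha.le (le_sqrt' ha y) _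
    nlinarith [sq_nonneg y, sq_nonneg a]
  have hB : (0:ℝ) < a ^ (m + n - 2) * (a ^ 2 + y ^ 2) := by positivity
  calc (Real.sqrt (a ^ 2 + y ^ 2) ^ (m + n))⁻¹
      ≤ (a ^ (m + n - 2) * (a ^ 2 + y ^ 2))⁻¹ := by
        exact inv_anti₀ hB hb
    _ = ‖(a ^ (m + n - 2))⁻¹ * (a ^ 2 + y ^ 2)⁻¹‖ := by
        rw [mul_inv]
        rw [Real.norm_eq_abs, abs_of_pos (by positivity)]

lemma hasDerivAt_u (y : ℝ) :
    HasDerivAt (fun y : ℝ => (a : ℂ) + Complex.I * y) Complex.I y := by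
  have h1 : HasDerivAt (fun y : ℝ => (y : ℂ)) 1 y := (hasDerivAt_id y).ofReal_comp
  have h2 := (h1.const_mul Complex.I).const_add (a : ℂ)
  simpa using h2

lemma integral_u_pow_zero (ha : 0 < a) {m : ℕ} (hm : 2 ≤ m) :
    ∫ y : ℝ, (((a : ℂ) + Complex.I * y) ^ m)⁻¹ = 0 := by
  have hint : Integrable fun y : ℝ => (((a : ℂ) + Complex.I * y) ^ m)⁻¹ := by
    have := integrable_aux ha m 0 (by omega)
    simpa using this
  set c : ℂ := (((1 : ℂ) - m) * Complex.I)⁻¹ with hc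
  set H : ℝ → ℂ := fun y => c * ((a : ℂ) + Complex.I * y) ^ ((1 : ℤ) - m) with hH
  have hm1 : ((1 : ℂ) - m) ≠ 0 :=
    sub_ne_zero.mpr (by exact_mod_cast (by omega : (1 : ℕ) ≠ m))
  have hderiv : ∀ y : ℝ, HasDerivAt H ((((a : ℂ) + Complex.I * y) ^ m)⁻¹) y := by
    intro y
    have h1 := (hasDerivAt_zpow ((1 : ℤ) - m) ((a : ℂ) + Complex.I * y)
      (Or.inl (ne_u ha y))).comp y (hasDerivAt_u y)
    have h2 := h1.const_mul c
    refine h2.congr_deriv ?_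
    have hne := ne_u ha y
    rw [hc]
    rw [show ((1 : ℤ) - m - 1) = -(m : ℤ) by ring]
    rw [zpow_neg, zpow_natCast]
    field_simp
    push_cast
    ring
  have key : ∀ T : ℝ, (∫ y in (-T)..T, (((a : ℂ) + Complex.I * y) ^ m)⁻¹) = H T - H (-T) := by
    intro T
    exact intervalIntegral.integral_eq_sub_of_hasDerivAt (fun y _ => hderiv y)
      hint.intervalIntegrable
  have h1 : Tendsto (fun T : ℝ => ∫ y in (-T)..T, (((a : ℂ) + Complex.I * y) ^ m)⁻¹)
      atTop (nhds (∫ y : ℝ, (((a : ℂ) + Complex.I * y) ^ m)⁻¹)) :=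
    intervalIntegral_tendsto_integral hint tendsto_neg_atTop_atBot tendsto_id
  have h0 : Tendsto (fun T : ℝ => ∫ y in (-T)..T, (((a : ℂ) + Complex.I * y) ^ m)⁻¹)
      atTop (nhds 0) := by
    simp_rw [key]
    rw [show (0 : ℂ) = 0 - 0 by ring]
    have hHlim : Tendsto (fun T : ℝ => H T) atTop (nhds 0) := by
      apply squeeze_zero_norm' (a := fun T : ℝ => ‖c‖ * (T ^ (m - 1))⁻¹)
      · filter_upwards [eventually_ge_atTop (1 : ℝ)] with T hT
        have hTpos : (0:ℝ) < T := by linarith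
        have hxT : T ≤ ‖(a : ℂ) + Complex.I * (T : ℝ)‖ := by
          calc T = |T| := (abs_of_pos hTpos).symm
            _ ≤ Real.sqrt (a ^ 2 + T ^ 2) := abs_le_sqrt T
            _ = ‖(a : ℂ) + Complex.I * T‖ := (norm_u T).symm
        have hnorm : ‖H T‖ = ‖c‖ * (‖(a : ℂ) + Complex.I * (T : ℝ)‖ ^ (m - 1))⁻¹ := by
          simp only [hH, norm_mul]
          congr 1
          rw [show ((1 : ℤ) - m) = -((m - 1 : ℕ) : ℤ) by push_cast; omega]
          rw [zpow_neg, norm_inv, zpow_natCast, norm_pow]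
        rw [hnorm]
        exact mul_le_mul_of_nonneg_left
          (inv_anti₀ (pow_pos hTpos _) (pow_le_pow_left₀ hTpos.le hxT _)) (norm_nonneg c)
      · rw [show (0:ℝ) = ‖c‖ * 0 by ring]
        apply Tendsto.const_mul
        apply Tendsto.inv_tendsto_atTop
        exact tendsto_pow_atTop (by omega) |>.comp tendsto_id
    have hHlim' : Tendsto (fun T : ℝ => H (-T)) atTop (nhds 0) := by
      apply squeeze_zero_norm' (a := fun T : ℝ => ‖c‖ * (T ^ (m - 1))⁻¹)
      · filter_upwards [eventually_ge_atTop (1 : ℝ)] with T hT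
        have hTpos : (0:ℝ) < T := by linarith
        have hxT : T ≤ ‖(a : ℂ) + Complex.I * ((-T : ℝ) : ℂ)‖ := by
          calc T = |(-T : ℝ)| := by rw [abs_neg, abs_of_pos hTpos]
            _ ≤ Real.sqrt (a ^ 2 + (-T) ^ 2) := abs_le_sqrt (-T)
            _ = ‖(a : ℂ) + Complex.I * ((-T : ℝ) : ℂ)‖ := (norm_u (-T)).symm
        have hnorm : ‖H (-T)‖ = ‖c‖ * (‖(a : ℂ) + Complex.I * ((-T : ℝ) : ℂ)‖ ^ (m - 1))⁻¹ := by
          simp only [hH, norm_mul]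
          congr 1
          rw [show ((1 : ℤ) - m) = -((m - 1 : ℕ) : ℤ) by push_cast; omega]
          rw [zpow_neg, norm_inv, zpow_natCast, norm_pow]
        rw [hnorm]
        exact mul_le_mul_of_nonneg_left
          (inv_anti₀ (pow_pos hTpos _) (pow_le_pow_left₀ hTpos.le hxT _)) (norm_nonneg c)
      · rw [show (0:ℝ) = ‖c‖ * 0 by ring]
        apply Tendsto.const_mul
        apply Tendsto.inv_tendsto_atTop
        exact tendsto_pow_atTop (by omega) |>.comp tendsto_id
    exact hHlim.sub hHlim'
  exact tendsto_nhds_unique h1 h0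

lemma integral_v_pow_zero (ha : 0 < a) {n : ℕ} (hn : 2 ≤ n) :
    ∫ y : ℝ, (((a : ℂ) - Complex.I * y) ^ n)⁻¹ = 0 := by
  have h := MeasureTheory.integral_neg_eq_self
    (fun y : ℝ => (((a : ℂ) + Complex.I * y) ^ n)⁻¹) volume
  rw [integral_u_pow_zero ha hn] at h
  rw [← h]
  congr 1
  funext y
  push_cast
  ring_nf

lemma J_zero_left (ha : 0 < a) {n : ℕ} (hn : 2 ≤ n) : J a 0 n = 0 := by
  rw [J]
  simp only [pow_zero, one_mul]
  exact integral_v_pow_zero ha hn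

lemma J_zero_right (ha : 0 < a) {m : ℕ} (hm : 2 ≤ m) : J a m 0 = 0 := by
  rw [J]
  simp only [pow_zero, mul_one]
  exact integral_u_pow_zero ha hm

lemma J_base (ha : 0 < a) : J a 1 1 = (Real.pi : ℂ) / a := by
  rw [J]
  have h : ∀ y : ℝ, (((a : ℂ) + Complex.I * y) ^ 1 * ((a : ℂ) - Complex.I * y) ^ 1)⁻¹
      = (((a ^ 2 + y ^ 2)⁻¹ : ℝ) : ℂ) := by
    intro y
    rw [pow_one, pow_one]
    push_cast
    rw [show ((a : ℂ) + Complex.I * y) * ((a : ℂ) - Complex.I * y)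
        = (a : ℂ) ^ 2 + (y : ℂ) ^ 2 by
      have : Complex.I ^ 2 = -1 := Complex.I_sq
      ring_nf
      linear_combination (-(y:ℂ)^2) * this]
  simp_rw [h]
  have hsm : ∀ y : ℝ, ((((a ^ 2 + y ^ 2)⁻¹ : ℝ)) : ℂ) = ((a ^ 2 + y ^ 2)⁻¹ : ℝ) • (1 : ℂ) := by
    intro y
    rw [Complex.real_smul, mul_one]
  simp_rw [hsm]
  rw [integral_smul_const, integral_real ha, Complex.real_smul, mul_one]
  push_cast
  ring

lemma ptwise (u v : ℂ) (hu : u ≠ 0) (hv : v ≠ 0) (huv : u + v ≠ 0) (p q : ℕ) :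
    (u + v)⁻¹ * ((u ^ p * v ^ (q + 1))⁻¹ + (u ^ (p + 1) * v ^ q)⁻¹)
      = (u ^ (p + 1) * v ^ (q + 1))⁻¹ := by
  have e : (u ^ p * v ^ (q + 1))⁻¹ + (u ^ (p + 1) * v ^ q)⁻¹
      = (u + v) * (u ^ (p + 1) * v ^ (q + 1))⁻¹ := by
    field_simp
    ring
  rw [e, ← mul_assoc, inv_mul_cancel₀ huv, one_mul]

lemma J_rec (ha : 0 < a) (p q : ℕ) (h : 1 ≤ p + q) :
    J a (p + 1) (q + 1) = (2 * (a : ℂ))⁻¹ * (J a p (q + 1) + J a (p + 1) q) := by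
  have h2a : (2 * (a : ℂ)) ≠ 0 :=
    mul_ne_zero two_ne_zero (Complex.ofReal_ne_zero.mpr ha.ne')
  have hpt : ∀ y : ℝ,
      (2 * (a : ℂ))⁻¹ * ((((a : ℂ) + Complex.I * y) ^ p * ((a : ℂ) - Complex.I * y) ^ (q + 1))⁻¹
        + (((a : ℂ) + Complex.I * y) ^ (p + 1) * ((a : ℂ) - Complex.I * y) ^ q)⁻¹)
      = (((a : ℂ) + Complex.I * y) ^ (p + 1) * ((a : ℂ) - Complex.I * y) ^ (q + 1))⁻¹ := by
    intro y
    have huv : ((a : ℂ) + Complex.I * y) + ((a : ℂ) - Complex.I * y) = 2 * a := by ring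
    rw [← huv]
    exact ptwise _ _ (ne_u ha y) (ne_v ha y) (huv ▸ h2a) p q
  rw [J, J, J]
  rw [← integral_add (integrable_aux ha p (q + 1) (by omega))
    (integrable_aux ha (p + 1) q (by omega))]
  rw [← MeasureTheory.integral_const_mul]
  congr 1
  funext y
  exact (hpt y).symm

lemma J_formula (ha : 0 < a) : ∀ k m n : ℕ, m + n = k → 1 ≤ m → 1 ≤ n →
    J a m n = (Real.pi : ℂ) * (Nat.choose (m + n - 2) (m - 1) : ℂ)
      / (2 ^ (m + n - 2) * (a : ℂ) ^ (m + n - 1)) := by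
  intro k
  induction k using Nat.strong_induction_on with
  | _ k ih =>
    intro m n hk hm hn
    have haC : (a : ℂ) ≠ 0 := Complex.ofReal_ne_zero.mpr ha.ne'
    match m, n with
    | 1, 1 =>
      rw [J_base ha]
      norm_num
    | 1, (q + 2) =>
      have hrec := J_rec ha 0 (q + 1) (by omega)
      rw [J_zero_left ha (by omega : 2 ≤ q + 2)] at hrec
      have hih := ih (1 + (q + 1)) (by omega) 1 (q + 1) rfl (by omega) (by omega)
      rw [hih] at hrec
      rw [show 0 + 1 = 1 by rfl] at hrec
      rw [hrec]
      rw [show 1 + (q + 1) - 2 = q from by omega, show 1 + (q + 1) - 1 = q + 1 from by omega,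
        show 1 + (q + 2) - 2 = q + 1 from by omega, show 1 + (q + 2) - 1 = q + 2 from by omega]
      simp only [Nat.sub_self, Nat.choose_zero_right, Nat.cast_one, add_zero, zero_add]
      rw [pow_succ (2 : ℂ) q, pow_succ ((a : ℂ)) (q + 1)]
      field_simp
      try ring
      try exact Or.inl trivial
    | (p + 2), 1 =>
      have hrec := J_rec ha (p + 1) 0 (by omega)
      rw [J_zero_right ha (by omega : 2 ≤ p + 2)] at hrec
      have hih := ih ((p + 1) + 1) (by omega) (p + 1) 1 rfl (by omega) (by omega)
      rw [hih] at hrec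
      rw [hrec]
      simp only [show p + 1 + 1 - 2 = p from by omega, show p + 1 - 1 = p from by omega,
        show p + 1 + 1 - 1 = p + 1 from by omega, show p + 2 + 1 - 2 = p + 1 from by omega,
        show p + 2 - 1 = p + 1 from by omega, show p + 2 + 1 - 1 = p + 2 from by omega]
      simp only [Nat.choose_self, Nat.cast_one, add_zero, zero_add]
      rw [pow_succ (2 : ℂ) p, pow_succ ((a : ℂ)) (p + 1)]
      field_simp
      try ring
      try exact Or.inl trivial
    | (p + 2), (q + 2) =>
      have hrec := J_rec ha (p + 1) (q + 1) (by omega)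
      have h1 := ih ((p + 1) + (q + 2)) (by omega) (p + 1) (q + 2) rfl (by omega) (by omega)
      have h2 := ih ((p + 2) + (q + 1)) (by omega) (p + 2) (q + 1) rfl (by omega) (by omega)
      rw [h1, h2] at hrec
      rw [hrec]
      have e1 : (p + 1) + (q + 2) - 2 = p + q + 1 := by omega
      have e2 : (p + 2) + (q + 1) - 2 = p + q + 1 := by omega
      have e3 : (p + 2) + (q + 2) - 2 = p + q + 2 := by omega
      have e4 : (p + 1) + (q + 2) - 1 = p + q + 2 := by omega
      have e5 : (p + 2) + (q + 1) - 1 = p + q + 2 := by omega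
      have e6 : (p + 2) + (q + 2) - 1 = p + q + 3 := by omega
      have e7 : (p + 1) - 1 = p := by omega
      have e8 : (p + 2) - 1 = p + 1 := by omega
      rw [e1, e2, e3, e4, e5, e6, e7, e8]
      have hpas : Nat.choose (p + q + 2) (p + 1)
          = Nat.choose (p + q + 1) p + Nat.choose (p + q + 1) (p + 1) :=
        Nat.choose_succ_succ (p + q + 1) p
      rw [hpas]
      push_cast
      field_simp
      ring

end FreqLoopAux

theorem freq_loop_integral_general (a : ℝ) (ha : 0 < a) (m n : ℕ) (hm : 1 ≤ m) (hn : 1 ≤ n) :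
    ∫ y : ℝ, (1 : ℂ) / (((a : ℂ) + Complex.I * (y : ℂ)) ^ m * ((a : ℂ) - Complex.I * (y : ℂ)) ^ n)
      = (Real.pi * (Nat.choose (m + n - 2) (m - 1) : ℝ) / (2 ^ (m + n - 2) * a ^ (m + n - 1)) : ℝ) := by
  have h := FreqLoopAux.J_formula ha (m + n) m n rfl hm hn
  rw [FreqLoopAux.J] at h
  simp only [one_div]
  rw [h]
  push_cast
  ring
end

section
/- Let m² > -1 and λ ∈ ℝ, and define f : ℝ⁴ × ℝ → ℂ by f(x, y) = i y + max(‖x‖², 1) + m². Then (32 λ³/π) · ∫_{ℝ⁴} ∫_ℝ 1/(f(x,y)³ · f(x,-y)) dy dx = 4 π² λ³ (m² (m² + 3) + 3) / (1 + m²)³. -/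
open MeasureTheory Complex Real Set Filter Topology

lemma pf_identity (a z w : ℂ) (ha : a ≠ 0) (hz : z ≠ 0) (hw : w ≠ 0) (hsum : z + w = 2*a) :
    1/(z^3*w) = 1/(4*a^2*(z*w)) + 1/(4*a^2*z^2) + 1/(2*a*z^3) := by
  have hA : (4*a^2*(z*w)) ≠ 0 := by
    apply mul_ne_zero (mul_ne_zero (by norm_num) (pow_ne_zero _ ha)) (mul_ne_zero hz hw)
  have hB : (4*a^2*z^2) ≠ 0 :=
    mul_ne_zero (mul_ne_zero (by norm_num) (pow_ne_zero _ ha)) (pow_ne_zero _ hz)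
  have hC : (2*a*z^3) ≠ 0 :=
    mul_ne_zero (mul_ne_zero (by norm_num) ha) (pow_ne_zero _ hz)
  have hD : (z^3*w) ≠ 0 := mul_ne_zero (pow_ne_zero _ hz) hw
  rw [div_add_div _ _ hA hB, div_add_div _ _ (mul_ne_zero hA hB) hC,
    div_eq_div_iff hD (mul_ne_zero (mul_ne_zero hA hB) hC)]
  linear_combination (-8*a^3*z^6*w*(z+2*a)) * hsum

lemma inner_integral (a : ℝ) (ha : 0 < a) :
    ∫ y : ℝ, 1 / ((Complex.I * (y:ℂ) + (a:ℂ)) ^ 3 * (Complex.I * ((-y : ℝ):ℂ) + (a:ℂ)))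
      = ((Real.pi / (4 * a ^ 3) : ℝ) : ℂ) := by
  have haC : (a : ℂ) ≠ 0 := by exact_mod_cast ha.ne'
  set z : ℝ → ℂ := fun y => (a:ℂ) + Complex.I * y with hzdef
  have hz : ∀ y : ℝ, z y ≠ 0 := by
    intro y h0
    apply ha.ne'
    have h1 := congrArg Complex.re h0
    simpa [hzdef] using h1
  have hw : ∀ y : ℝ, 2*(a:ℂ) - z y ≠ 0 := by
    intro y h0
    have h1 := congrArg Complex.re h0
    simp [hzdef] at h1
    linarith
  have hzw : ∀ y : ℝ, z y * (2*(a:ℂ) - z y) = ((a^2 + y^2 : ℝ) : ℂ) := by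
    intro y
    simp only [hzdef]
    push_cast
    linear_combination (-(y:ℂ)^2) * Complex.I_sq
  have hsq : ∀ y : ℝ, (0:ℝ) < a^2 + y^2 := fun y => by positivity
  set g : ℝ → ℂ := fun y =>
    1 / ((Complex.I * (y:ℂ) + (a:ℂ)) ^ 3 * (Complex.I * ((-y : ℝ):ℂ) + (a:ℂ))) with hgdef
  have hrw1 : ∀ y : ℝ, (Complex.I * (y:ℂ) + (a:ℂ)) = z y := by
    intro y; simp only [hzdef]; ring
  have hrw2 : ∀ y : ℝ, (Complex.I * ((-y : ℝ):ℂ) + (a:ℂ)) = 2*(a:ℂ) - z y := by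
    intro y; simp only [hzdef]; push_cast; ring
  have hg' : ∀ y : ℝ, g y = 1/(4*(a:ℂ)^2*((a^2 + y^2 : ℝ):ℂ)) + 1/(4*(a:ℂ)^2*(z y)^2)
      + 1/(2*(a:ℂ)*(z y)^3) := by
    intro y
    simp only [hgdef]
    rw [hrw2 y, hrw1 y]
    rw [pf_identity (a:ℂ) (z y) (2*(a:ℂ) - z y) haC (hz y) (hw y) (by ring), hzw y]
  set F : ℝ → ℂ := fun y =>
    ((Real.arctan (y / a) / (4 * a ^ 3) : ℝ) : ℂ)
      + Complex.I / (4 * (a:ℂ) ^ 2) * (z y)⁻¹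
      + Complex.I / (4 * (a:ℂ)) * ((z y) ^ 2)⁻¹ with hFdef
  have hderiv : ∀ y : ℝ, HasDerivAt F (g y) y := by
    intro y
    have hz1 : HasDerivAt z Complex.I y := by
      have h0 : HasDerivAt (fun y : ℝ => ((y:ℝ):ℂ)) 1 y := (hasDerivAt_id y).ofReal_comp
      simpa only [mul_one] using (h0.const_mul Complex.I).const_add (a:ℂ)
    have hd1 : HasDerivAt (fun t : ℝ => ((Real.arctan (t / a) / (4 * a ^ 3) : ℝ) : ℂ))
        ((1/(4*a^2*(a^2+y^2)) : ℝ) : ℂ) y := by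
      have h0 : HasDerivAt (fun t : ℝ => t / a) (1/a) y := (hasDerivAt_id y).div_const a
      have h1 : HasDerivAt (fun t : ℝ => Real.arctan (t / a))
          (1 / (1 + (y/a)^2) * (1/a)) y := by exact (Real.hasDerivAt_arctan (y/a)).comp y h0
      have h2 := (h1.div_const (4 * a ^ 3)).ofReal_comp
      convert h2 using 2
      have hne : (1 + (y/a)^2) ≠ 0 := by positivity
      field_simp
    have hd2 : HasDerivAt (fun t : ℝ => Complex.I / (4 * (a:ℂ) ^ 2) * (z t)⁻¹)
        (1/(4*(a:ℂ)^2*(z y)^2)) y := by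
      have h0 : HasDerivAt (fun t : ℝ => (z t)⁻¹) (-((z y)^2)⁻¹ * Complex.I) y := by
        simpa [Function.comp_def] using (hasDerivAt_inv (hz y)).comp y hz1
      have h1 := h0.const_mul (Complex.I / (4 * (a:ℂ) ^ 2))
      convert h1 using 1
      · rfl
      have hzy := hz y
      field_simp
      linear_combination Complex.I_sq
    have hd3 : HasDerivAt (fun t : ℝ => Complex.I / (4 * (a:ℂ)) * ((z t) ^ 2)⁻¹)
        (1/(2*(a:ℂ)*(z y)^3)) y := by
      have h0 : HasDerivAt (fun t : ℝ => ((z t)^2)⁻¹)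
          (-((2:ℕ) * (z y)^(2-1)) / ((z y)^2)^2 * Complex.I) y := by
        simpa [Function.comp_def] using
          ((hasDerivAt_pow 2 (z y)).inv (pow_ne_zero 2 (hz y))).comp y hz1
      have h1 := h0.const_mul (Complex.I / (4 * (a:ℂ)))
      convert h1 using 1
      · rfl
      have hzy := hz y
      field_simp
      linear_combination (4*(a:ℂ) + 4*Complex.I*(y:ℂ)) * Complex.I_sq
    have hsum := (hd1.add hd2).add hd3
    rw [hg' y]
    convert hsum using 1
    · rfl
    · rfl
    push_cast
    ring
  have hzinv_top : Tendsto (fun y : ℝ => (z y)⁻¹) atTop (𝓝 0) := by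
    rw [tendsto_zero_iff_norm_tendsto_zero]
    simp only [norm_inv]
    apply Tendsto.inv_tendsto_atTop
    apply tendsto_atTop_mono (fun y : ℝ => ?_) tendsto_id
    calc (id y : ℝ) ≤ |y| := le_abs_self y
    _ = |(z y).im| := by simp [hzdef]
    _ ≤ ‖z y‖ := Complex.abs_im_le_norm _
  have hzinv_bot : Tendsto (fun y : ℝ => (z y)⁻¹) atBot (𝓝 0) := by
    rw [tendsto_zero_iff_norm_tendsto_zero]
    simp only [norm_inv]
    apply Tendsto.inv_tendsto_atTop
    apply tendsto_atTop_mono (fun y : ℝ => ?_) tendsto_neg_atBot_atTop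
    calc -y ≤ |y| := neg_le_abs y
    _ = |(z y).im| := by simp [hzdef]
    _ ≤ ‖z y‖ := Complex.abs_im_le_norm _
  have hz2inv_top : Tendsto (fun y : ℝ => ((z y)^2)⁻¹) atTop (𝓝 0) := by
    have h0 := hzinv_top.mul hzinv_top
    simpa [← mul_inv, ← sq] using h0
  have hz2inv_bot : Tendsto (fun y : ℝ => ((z y)^2)⁻¹) atBot (𝓝 0) := by
    have h0 := hzinv_bot.mul hzinv_bot
    simpa [← mul_inv, ← sq] using h0
  have harctan_top : Tendsto (fun y : ℝ => Real.arctan (y / a)) atTop (𝓝 (π/2)) := by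
    have h0 : Tendsto (fun y : ℝ => y / a) atTop atTop := tendsto_id.atTop_div_const ha
    exact (tendsto_nhds_of_tendsto_nhdsWithin Real.tendsto_arctan_atTop).comp h0
  have harctan_bot : Tendsto (fun y : ℝ => Real.arctan (y / a)) atBot (𝓝 (-(π/2))) := by
    have h0 : Tendsto (fun y : ℝ => y / a) atBot atBot := tendsto_id.atBot_div_const ha
    exact (tendsto_nhds_of_tendsto_nhdsWithin Real.tendsto_arctan_atBot).comp h0
  have htop : Tendsto F atTop (𝓝 (((π/2 / (4*a^3) : ℝ):ℂ))) := by
    have h1 : Tendsto (fun y : ℝ => ((Real.arctan (y / a) / (4 * a ^ 3) : ℝ) : ℂ)) atTop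
        (𝓝 ((π/2 / (4*a^3) : ℝ):ℂ)) :=
      (Complex.continuous_ofReal.tendsto _).comp (harctan_top.div_const _)
    have h2 := hzinv_top.const_mul (Complex.I / (4 * (a:ℂ) ^ 2))
    have h3 := hz2inv_top.const_mul (Complex.I / (4 * (a:ℂ)))
    have H := (h1.add h2).add h3
    simp only [mul_zero, add_zero] at H
    rw [hFdef]
    exact H
  have hbot : Tendsto F atBot (𝓝 ((-(π/2) / (4*a^3) : ℝ):ℂ)) := by
    have h1 : Tendsto (fun y : ℝ => ((Real.arctan (y / a) / (4 * a ^ 3) : ℝ) : ℂ)) atBot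
        (𝓝 ((-(π/2) / (4*a^3) : ℝ):ℂ)) :=
      (Complex.continuous_ofReal.tendsto _).comp (harctan_bot.div_const _)
    have h2 := hzinv_bot.const_mul (Complex.I / (4 * (a:ℂ) ^ 2))
    have h3 := hz2inv_bot.const_mul (Complex.I / (4 * (a:ℂ)))
    have H := (h1.add h2).add h3
    simp only [mul_zero, add_zero] at H
    rw [hFdef]
    exact H
  have hnorm : ∀ y : ℝ, ‖g y‖ = ((a^2+y^2)^2)⁻¹ := by
    intro y
    have hnz : ‖z y‖ = Real.sqrt (a^2+y^2) := by
      rw [Complex.norm_def]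
      congr 1
      simp [Complex.normSq_apply, hzdef]
      try ring
    have hnw : ‖2*(a:ℂ) - z y‖ = Real.sqrt (a^2+y^2) := by
      rw [Complex.norm_def]
      congr 1
      simp [Complex.normSq_apply, hzdef]
      try ring
    simp only [hgdef]
    rw [hrw2 y, hrw1 y]
    simp only [one_div, norm_inv, norm_mul, norm_pow, hnz, hnw]
    congr 1
    have hs := Real.sq_sqrt (hsq y).le
    linear_combination (Real.sqrt (a^2+y^2)^2 + (a^2+y^2)) * hs
  have hgint : Integrable g := by
    set C : ℝ := ((min (a^2) 1)^2)⁻¹ with hC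
    have hmin : (0:ℝ) < min (a^2) 1 := lt_min (by positivity) one_pos
    apply Integrable.mono' (integrable_inv_one_add_sq.const_mul C)
    · apply Continuous.aestronglyMeasurable
      apply continuous_const.div
      · fun_prop
      · intro y
        rw [hrw2 y, hrw1 y]
        exact mul_ne_zero (pow_ne_zero 3 (hz y)) (hw y)
    · filter_upwards with y
      rw [hnorm y]
      have hb : min (a^2) 1 * (1+y^2) ≤ a^2+y^2 := by
        rcases min_cases (a^2) 1 with ⟨h1, h2⟩ | ⟨h1, h2⟩ <;> nlinarith [sq_nonneg y]
      have h3 : (0:ℝ) ≤ min (a^2) 1 * (1+y^2) := by positivity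
      have e1 : (min (a^2) 1 * (1+y^2))^2 ≤ (a^2+y^2)^2 := pow_le_pow_left₀ h3 hb 2
      have e2 : (0:ℝ) ≤ (min (a^2) 1)^2 * (1+y^2) * y^2 := by positivity
      have hb2 : (min (a^2) 1)^2 * (1+y^2) ≤ (a^2+y^2)^2 := by nlinarith [e1, e2]
      rw [hC, ← mul_inv]
      exact inv_anti₀ (by positivity) hb2
  rw [MeasureTheory.integral_of_hasDerivAt_of_tendsto hderiv hgint hbot htop]
  rw [← Complex.ofReal_sub]
  congr 1
  field_simp
  ring

lemma radial_integral (m : ℝ) (hm : -1 < m) :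
    ∫ r in Ioi (0:ℝ), r^3 * (π / (4*(max (r^2) 1 + m)^3))
      = π * (m*(m+3)+3)/(16*(1+m)^3) := by
  have h1m : (0:ℝ) < 1 + m := by linarith
  have hpos : ∀ r : ℝ, 0 < max (r^2) 1 + m := by
    intro r
    have := le_max_right (r^2) 1
    linarith
  have hcont : Continuous fun r : ℝ => r^3 * (π / (4*(max (r^2) 1 + m)^3)) := by
    apply (continuous_pow 3).mul
    apply continuous_const.div
    · exact continuous_const.mul ((((continuous_pow 2).max continuous_const).add
        continuous_const).pow 3)
    · intro x
      have := hpos x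
      positivity
  set c : ℝ := min 1 (1+m) with hc
  have hcpos : (0:ℝ) < c := lt_min one_pos h1m
  have hqpos : ∀ r : ℝ, r ∈ Ioi (1:ℝ) → (0:ℝ) < r^2 + m := by
    intro r hr
    have : (1:ℝ) < r := hr
    nlinarith
  have heq : ∀ r ∈ Ioi (1:ℝ), max (r^2) 1 = r^2 := by
    intro r hr
    have : (1:ℝ) < r := hr
    exact max_eq_left (by nlinarith)
  have hint2' : IntegrableOn (fun r : ℝ => r^3 * (π / (4*(r^2 + m)^3))) (Ioi 1) := by
    apply Integrable.mono'
      ((integrableOn_Ioi_rpow_of_lt (by norm_num : (-3:ℝ) < -1) one_pos).const_mul (π/4 * c⁻¹^3))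
    · apply ContinuousOn.aestronglyMeasurable _ measurableSet_Ioi
      apply ((continuous_pow 3).continuousOn).mul
      apply continuousOn_const.div
      · exact (continuous_const.mul (((continuous_pow 2).add continuous_const).pow 3)).continuousOn
      · intro r hr
        have := hqpos r hr
        positivity
    · rw [ae_restrict_iff' measurableSet_Ioi]
      filter_upwards with r hr
      have hr1 : (1:ℝ) < r := hr
      have hr0 : (0:ℝ) < r := by linarith
      have hq := hqpos r hr
      have hcr : c * r^2 ≤ r^2 + m := by
        rcases min_cases 1 (1+m) with ⟨h1, h2⟩ | ⟨h1, h2⟩ <;> rw [hc, h1]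
        · nlinarith
        · have hmr : m * (r^2 - 1) ≤ 0 :=
            mul_nonpos_of_nonpos_of_nonneg (by linarith) (by nlinarith)
          nlinarith
      have key : c^3 * (r^3)^2 ≤ (r^2+m)^3 := by
        calc c^3 * (r^3)^2 = (c * r^2)^3 := by ring
        _ ≤ (r^2+m)^3 := by
            apply pow_le_pow_left₀ (by positivity) hcr
      rw [Real.norm_eq_abs, _root_.abs_of_nonneg (by positivity)]
      rw [show (-3:ℝ) = -(3:ℕ) by norm_num, Real.rpow_neg hr0.le, Real.rpow_natCast]
      have inner : r^3/(r^2+m)^3 ≤ 1/(c^3*r^3) := by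
        rw [div_le_div_iff₀ (by positivity) (by positivity)]
        nlinarith [key]
      have hqne := hq.ne'
      have e1 : r^3 * (π/(4*(r^2+m)^3)) = π/4 * (r^3/(r^2+m)^3) := by
        field_simp
      have e2 : π/4 * (r^3/(r^2+m)^3) ≤ π/4 * (1/(c^3*r^3)) :=
        mul_le_mul_of_nonneg_left inner (by positivity)
      have e3 : π/4 * (1/(c^3*r^3)) = π/4 * c⁻¹^3 * (r^3)⁻¹ := by
        rw [one_div, mul_inv, inv_pow]; ring
      rw [e1, ← e3]
      exact e2
  have hint2 : IntegrableOn (fun r : ℝ => r^3 * (π / (4*(max (r^2) 1 + m)^3))) (Ioi 1) := by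
    apply hint2'.congr_fun _ measurableSet_Ioi
    intro r hr
    dsimp only
    rw [heq r hr]
  have hint1 : IntegrableOn (fun r : ℝ => r^3 * (π / (4*(max (r^2) 1 + m)^3))) (Ioc 0 1) :=
    hcont.integrableOn_Ioc
  rw [← Ioc_union_Ioi_eq_Ioi (zero_le_one' ℝ),
    setIntegral_union (Ioc_disjoint_Ioi le_rfl) measurableSet_Ioi hint1 hint2]
  have I1 : ∫ r in Ioc (0:ℝ) 1, r^3 * (π / (4*(max (r^2) 1 + m)^3))
      = (1/4) * (π / (4*(1+m)^3)) := by
    rw [setIntegral_congr_fun measurableSet_Ioc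
      (g := fun r : ℝ => r^3 * (π / (4*(1 + m)^3)))
      (fun r hr => by
        have h1 : r ≤ 1 := hr.2
        have h0 : 0 < r := hr.1
        rw [max_eq_right (by nlinarith : r^2 ≤ 1)])]
    rw [MeasureTheory.integral_mul_const]
    congr 1
    rw [← intervalIntegral.integral_of_le zero_le_one]
    norm_num [integral_pow]
  have I2 : ∫ r in Ioi (1:ℝ), r^3 * (π / (4*(max (r^2) 1 + m)^3))
      = 0 - ((-π/8) * ((1^2+m)⁻¹) + (π*m/16) * (((1^2+m)^2)⁻¹)) := by
    rw [setIntegral_congr_fun measurableSet_Ioi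
      (g := fun r : ℝ => r^3 * (π / (4*(r^2 + m)^3)))
      (fun r hr => by dsimp only; rw [heq r hr])]
    apply integral_Ioi_of_hasDerivAt_of_tendsto'
      (f := fun r : ℝ => (-π/8) * ((r^2+m)⁻¹) + (π*m/16) * (((r^2+m)^2)⁻¹))
    · intro r hr
      have hr1 : (1:ℝ) ≤ r := hr
      have hq : (0:ℝ) < r^2 + m := by nlinarith
      have hd0 : HasDerivAt (fun r : ℝ => r^2 + m) (2*r) r := by
        simpa using (hasDerivAt_pow 2 r).add_const m
      have hd1 := (hd0.inv hq.ne').const_mul (-π/8 : ℝ)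
      have hd2 := ((hd0.pow 2).inv (pow_ne_zero 2 hq.ne')).const_mul (π*m/16 : ℝ)
      have := hd1.add hd2
      convert this using 1
      · rfl
      simp only [Pi.pow_apply]
      field_simp
      ring
    · exact hint2'
    · have hq : Tendsto (fun r : ℝ => r^2 + m) atTop atTop :=
        tendsto_atTop_add_const_right _ m (tendsto_pow_atTop two_ne_zero)
      have t1 := hq.inv_tendsto_atTop.const_mul (-π/8 : ℝ)
      have t2 := (((tendsto_pow_atTop two_ne_zero).comp hq).inv_tendsto_atTop).const_mul
        (π*m/16 : ℝ)
      have := t1.add t2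
      simpa using this
  rw [I1, I2]
  field_simp
  ring

theorem sextic_melonic_coupling (msq lam : ℝ) (h : -1 < msq)
    (f : (EuclideanSpace ℝ (Fin 4)) × ℝ → ℂ)
    (hf : ∀ x y, f (x, y) = Complex.I * (y : ℂ) + ((max (‖x‖ ^ 2) 1 + msq : ℝ) : ℂ)) :
    (32 * (lam : ℂ) ^ 3 / (Real.pi : ℂ)) *
        ∫ x : EuclideanSpace ℝ (Fin 4), ∫ y : ℝ, 1 / (f (x, y) ^ 3 * f (x, -y))
      = 4 * (Real.pi : ℂ) ^ 2 * (lam : ℂ) ^ 3 *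
          ((msq : ℂ) * ((msq : ℂ) + 3) + 3) / (1 + (msq : ℂ)) ^ 3 := by
  have hinner : ∀ x : EuclideanSpace ℝ (Fin 4),
      (∫ y : ℝ, 1 / (f (x, y) ^ 3 * f (x, -y)))
        = ((π / (4 * (max (‖x‖^2) 1 + msq)^3) : ℝ) : ℂ) := by
    intro x
    have ha : 0 < max (‖x‖^2) 1 + msq := by
      have := le_max_right (‖x‖^2) 1
      linarith
    have key := inner_integral (max (‖x‖^2) 1 + msq) ha
    simp only [hf]
    exact key
  have h1 : (∫ x : EuclideanSpace ℝ (Fin 4), ∫ y : ℝ, 1 / (f (x, y) ^ 3 * f (x, -y)))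
      = ∫ x : EuclideanSpace ℝ (Fin 4),
          (fun r : ℝ => ((π / (4 * (max (r^2) 1 + msq)^3) : ℝ) : ℂ)) ‖x‖ := by
    congr 1
    funext x
    rw [hinner x]
  rw [h1, MeasureTheory.integral_fun_norm_addHaar volume
    (fun r : ℝ => ((π / (4 * (max (r^2) 1 + msq)^3) : ℝ) : ℂ))]
  have hdim : Module.finrank ℝ (EuclideanSpace ℝ (Fin 4)) = 4 := finrank_euclideanSpace_fin
  rw [hdim]
  have h2 : (∫ r in Ioi (0:ℝ), r ^ (4-1) • ((π / (4 * (max (r^2) 1 + msq)^3) : ℝ) : ℂ))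
      = ((π * (msq*(msq+3)+3)/(16*(1+msq)^3) : ℝ) : ℂ) := by
    have e : ∀ r : ℝ, r ^ (4-1) • ((π / (4 * (max (r^2) 1 + msq)^3) : ℝ) : ℂ)
        = (((r^3 * (π / (4 * (max (r^2) 1 + msq)^3)) : ℝ)) : ℂ) := by
      intro r
      norm_num [Complex.real_smul]
    rw [setIntegral_congr_fun measurableSet_Ioi (fun r _ => e r), ← radial_integral msq h]
    exact integral_ofReal
  rw [h2]
  have hvol : (volume (Metric.ball (0:EuclideanSpace ℝ (Fin 4)) 1)).toReal = π^2/2 := by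
    rw [EuclideanSpace.volume_ball]
    have hcard : Fintype.card (Fin 4) = 4 := by simp
    rw [hcard]
    have hG : Real.Gamma (((4:ℕ):ℝ)/2 + 1) = 2 := by
      rw [show ((4:ℕ):ℝ)/2 + 1 = ((2:ℕ):ℝ) + 1 by norm_num, Real.Gamma_nat_eq_factorial]
      norm_num
    have hs : Real.sqrt π ^ 4 = π^2 := by
      rw [show (4:ℕ) = 2*2 from rfl, pow_mul, Real.sq_sqrt Real.pi_pos.le]
    rw [hG, hs, ENNReal.ofReal_one, one_pow, one_mul,
      ENNReal.toReal_ofReal (by positivity)]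
  rw [measureReal_def, hvol]
  have hπ : (π:ℂ) ≠ 0 := by exact_mod_cast Real.pi_ne_zero
  have h1m : (1:ℂ) + (msq:ℂ) ≠ 0 := by
    have : (0:ℝ) < 1 + msq := by linarith
    intro h0
    have h2 := congrArg Complex.re h0
    simp at h2
    linarith
  simp only [nsmul_eq_mul, Complex.real_smul]
  rw [show ((π^2/2 : ℝ):ℂ) * ((π*(msq*(msq+3)+3)/(16*(1+msq)^3) : ℝ):ℂ)
      = ((π^3*(msq*(msq+3)+3)/(32*(1+msq)^3) : ℝ):ℂ) by
    rw [← Complex.ofReal_mul]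
    congr 1
    have : (1+msq) ≠ 0 := by linarith
    field_simp
    ring]
  rw [show ((π^3*(msq*(msq+3)+3)/(32*(1+msq)^3) : ℝ) : ℂ)
      = (π:ℂ)^3*((msq:ℂ)*((msq:ℂ)+3)+3)/(32*(1+(msq:ℂ))^3) by push_cast; ring]
  field_simp [hπ, h1m]
  ring
end
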